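/- Let n, s be nonnegative integers with s even and let β > 0. Then ∫_{-∞}^{∞} x^{s} e^{-βx²} [H_n(x)]² dx = 2^{2n} β^{-n−(s+1)/2} Σ_{k=0}^{n} C(n,k)² k! (β/2)^k Γ(1/2 − k + n + s/2) · ₂F₁(k − n, 1/2 + k − n; 1/2 + k − n − s/2; β). -/

import Mathlib

open MeasureTheory Finset Real

/-- Pochhammer symbol `(a)_k = a (a+1) ⋯ (a+k-1)`. -/
noncomputable def poch (a : ℝ) (k : ℕ) : ℝ := ∏ i ∈ Finset.range k, (a + i)

/-- Generalized binomial coefficient `C(a, j) = (a-j+1)_j / j!`. -/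
noncomputable def gbinom (a : ℝ) (j : ℕ) : ℝ := poch (a - j + 1) j / (j.factorial : ℝ)

/-- Generalized Laguerre polynomial `L_n^{(α)}`. -/
noncomputable def Lag (α : ℝ) (n : ℕ) (x : ℝ) : ℝ :=
  ∑ i ∈ Finset.range (n + 1),
    ((-1 : ℝ) ^ i / (i.factorial : ℝ)) * gbinom ((n : ℝ) + α) (n - i) * x ^ i

/-- Physicists' Hermite polynomial `H_n`. -/
noncomputable def Herm (n : ℕ) (x : ℝ) : ℝ :=
  ∑ k ∈ Finset.range (n / 2 + 1),
    ((-1 : ℝ) ^ k * (n.factorial : ℝ) / ((k.factorial : ℝ) * ((n - 2 * k).factorial : ℝ))) *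
      (2 * x) ^ (n - 2 * k)

/-- Jacobi polynomial `P_n^{(α,γ)}`. -/
noncomputable def Jac (α γ : ℝ) (n : ℕ) (x : ℝ) : ℝ :=
  ∑ k ∈ Finset.range (n + 1),
    gbinom ((n : ℝ) + α) (n - k) * gbinom ((n : ℝ) + γ) k *
      ((x - 1) / 2) ^ k * ((x + 1) / 2) ^ (n - k)

/-- Terminating Lauricella function of type A. -/
noncomputable def lauricellaA {r : ℕ} (a : ℝ) (m : Fin r → ℕ) (c x : Fin r → ℝ) : ℝ :=
  ∑ j ∈ Fintype.piFinset (fun i => Finset.range (m i + 1)),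
    poch a (∑ i, j i) *
      ∏ i, (poch (-(m i : ℝ)) (j i) / (poch (c i) (j i) * ((j i).factorial : ℝ)) * x i ^ (j i))

/-- Terminating Gauss hypergeometric sum `₂F₁(-k, b; c; x)`. -/
noncomputable def hyp2F1 (k : ℕ) (b c x : ℝ) : ℝ :=
  ∑ j ∈ Finset.range (k + 1),
    poch (-(k : ℝ)) j * poch b j / (poch c j * (j.factorial : ℝ)) * x ^ j

/-- Terminating hypergeometric sum `₃F₂(-k, b₁, b₂; c₁, c₂; x)`. -/
noncomputable def hyp3F2 (k : ℕ) (b₁ b₂ c₁ c₂ x : ℝ) : ℝ :=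
  ∑ j ∈ Finset.range (k + 1),
    poch (-(k : ℝ)) j * poch b₁ j * poch b₂ j /
      (poch c₁ j * poch c₂ j * (j.factorial : ℝ)) * x ^ j

/-- Gauss hypergeometric series `₂F₁(a, b; c; x)` (a terminating series when `a` or `b`
is a nonpositive integer). -/
noncomputable def hypSum (a b c x : ℝ) : ℝ :=
  ∑' j : ℕ, poch a j * poch b j / (poch c j * (j.factorial : ℝ)) * x ^ j

/-- Terminating Appell function `F₂(a; -m₁, -m₂; c₁, c₂; x₁, x₂)`. -/
noncomputable def appellF2 (a : ℝ) (m₁ m₂ : ℕ) (c₁ c₂ x₁ x₂ : ℝ) : ℝ :=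
  ∑ j₁ ∈ Finset.range (m₁ + 1), ∑ j₂ ∈ Finset.range (m₂ + 1),
    poch a (j₁ + j₂) * poch (-(m₁ : ℝ)) j₁ * poch (-(m₂ : ℝ)) j₂ /
      (poch c₁ j₁ * poch c₂ j₂ * (j₁.factorial : ℝ) * (j₂.factorial : ℝ)) * x₁ ^ j₁ * x₂ ^ j₂

/-- `1/z!` with the convention that it vanishes for negative integers `z`. -/
noncomputable def invFacZ (z : ℤ) : ℝ := if 0 ≤ z then ((z.toNat.factorial : ℕ) : ℝ)⁻¹ else 0

/-- Pochhammer symbol extended to integer index via `(a)_k = Γ(a+k)/Γ(a)` for negative `k`. -/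
noncomputable def pochZ (a : ℝ) (k : ℤ) : ℝ :=
  if 0 ≤ k then poch a k.toNat else Real.Gamma (a + (k : ℝ)) / Real.Gamma a



section HermAux


lemma integrable_pow_gauss {β : ℝ} (hβ : 0 < β) (p : ℕ) :
    Integrable (fun x : ℝ => x ^ p * Real.exp (-β * x ^ 2)) := by
  have h := integrable_rpow_mul_exp_neg_mul_sq hβ (s := (p : ℝ))
    (by exact lt_of_lt_of_le neg_one_lt_zero (Nat.cast_nonneg p))
  simpa [Real.rpow_natCast] using h

lemma moment_gauss {β : ℝ} (hβ : 0 < β) (m : ℕ) :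
    ∫ x : ℝ, x ^ (2 * m) * Real.exp (-β * x ^ 2)
      = Real.Gamma ((m : ℝ) + 1 / 2) * β ^ (-((m : ℝ) + 1 / 2)) := by
  have h1 : (∫ x : ℝ, x ^ (2 * m) * Real.exp (-β * x ^ 2))
      = 2 * ∫ x in Set.Ioi (0:ℝ), x ^ (2 * m) * Real.exp (-β * x ^ 2) := by
    rw [← integral_comp_abs (f := fun x : ℝ => x ^ (2 * m) * Real.exp (-β * x ^ 2))]
    congr 1; funext x
    simp [pow_mul, sq_abs]
  rw [h1]
  have h2 : (∫ x in Set.Ioi (0:ℝ), x ^ (2 * m) * Real.exp (-β * x ^ 2))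
      = (1/2) * ∫ y in Set.Ioi (0:ℝ), y ^ (((m:ℝ) + 1/2) - 1) * Real.exp (-(β * y)) := by
    rw [← integral_comp_rpow_Ioi_of_pos (p := 2) (g := fun y : ℝ =>
        y ^ (((m:ℝ) + 1/2) - 1) * Real.exp (-(β * y))) zero_lt_two, ← integral_const_mul]
    refine setIntegral_congr_fun measurableSet_Ioi fun x hx => ?_
    have hx0 : (0:ℝ) < x := hx
    have hx2 : x ^ (2:ℝ) = x ^ 2 := by rw [← Real.rpow_natCast x 2]; norm_num
    rw [smul_eq_mul, hx2]
    have e1 : (x ^ 2 : ℝ) ^ (((m:ℝ) + 1/2) - 1) = x ^ (2 * m) / x := by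
      rw [← Real.rpow_natCast x 2, ← Real.rpow_mul hx0.le]
      have : ((2:ℕ):ℝ) * ((m + 1/2) - 1) = (2 * m : ℕ) - 1 := by push_cast; ring
      rw [this, Real.rpow_sub hx0, Real.rpow_one, Real.rpow_natCast]
    have e2 : x ^ ((2:ℝ) - 1) = x := by norm_num
    rw [e1, e2]
    field_simp
  rw [h2, integral_rpow_mul_exp_neg_mul_Ioi (by positivity) hβ]
  rw [one_div β, ← Real.rpow_neg_one β, ← Real.rpow_mul hβ.le, neg_one_mul]
  ring

/-- guarded Hermite coefficient -/
noncomputable def hc (n k : ℕ) : ℝ :=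
  if 2 * k ≤ n then
    (-1 : ℝ) ^ k * (n.factorial : ℝ) / ((k.factorial : ℝ) * ((n - 2 * k).factorial : ℝ))
  else 0
lemma hc_of_le {n k : ℕ} (h : 2 * k ≤ n) :
    hc n k = (-1 : ℝ) ^ k * (n.factorial : ℝ) /
      ((k.factorial : ℝ) * ((n - 2 * k).factorial : ℝ)) := if_pos h

lemma hc_of_gt {n k : ℕ} (h : n < 2 * k) : hc n k = 0 := if_neg (by omega)

lemma Herm_eq_sum (n : ℕ) (x : ℝ) :
    Herm n x = ∑ k ∈ Finset.range (n + 1), hc n k * (2 * x) ^ (n - 2 * k) := by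
  rw [Herm]
  rw [Finset.sum_congr rfl (fun k hk => ?_)]
  · exact Finset.sum_subset (Finset.range_subset_range.mpr (by omega))
      (fun k _ hk2 => by
        rw [hc_of_gt (by simp only [Finset.mem_range] at hk2; omega), zero_mul])
  · rw [hc_of_le (by simp only [Finset.mem_range] at hk; omega)]

lemma fcast (a : ℕ) : ((a + 1).factorial : ℝ) = ((a : ℝ) + 1) * (a.factorial : ℝ) := by
  rw [Nat.factorial_succ]; push_cast; ring

lemma fne (a : ℕ) : ((a.factorial : ℕ) : ℝ) ≠ 0 :=
  Nat.cast_ne_zero.mpr (Nat.factorial_ne_zero a)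

lemma hc_zero (n : ℕ) : hc n 0 = 1 := by
  rw [hc_of_le (by omega)]
  simp only [pow_zero, one_mul, Nat.factorial_zero, Nat.mul_zero, Nat.sub_zero, Nat.cast_one]
  exact div_self (fne n)

lemma herm_rec (n : ℕ) (x : ℝ) :
    Herm (n + 2) x = 2 * x * Herm (n + 1) x - 2 * ((n : ℝ) + 1) * Herm n x := by
  rw [Herm_eq_sum, Herm_eq_sum, Herm_eq_sum]
  rw [Finset.mul_sum, Finset.mul_sum]
  -- extend middle sum from range (n+2) to range (n+3)
  have hmid : ∑ k ∈ Finset.range (n + 2), 2 * x * (hc (n+1) k * (2*x) ^ (n+1 - 2*k))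
      = ∑ k ∈ Finset.range (n + 3), 2 * x * (hc (n+1) k * (2*x) ^ (n+1 - 2*k)) := by
    refine Finset.sum_subset (Finset.range_subset_range.mpr (by omega)) (fun k _ hk2 => ?_)
    simp only [Finset.mem_range] at hk2
    rw [hc_of_gt (by omega)]
    ring
  -- shift last sum
  have hlast : ∑ k ∈ Finset.range (n + 1), 2 * ((n:ℝ)+1) * (hc n k * (2*x) ^ (n - 2*k))
      = ∑ k ∈ Finset.range (n + 3),
          (if k = 0 then 0 else 2 * ((n:ℝ)+1) * (hc n (k-1) * (2*x) ^ (n - 2*(k-1)))) := by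
    rw [Finset.sum_range_succ' (fun k =>
      (if k = 0 then 0 else 2 * ((n:ℝ)+1) * (hc n (k-1) * (2*x) ^ (n - 2*(k-1))))) (n+2)]
    simp only [if_neg (Nat.succ_ne_zero _), reduceIte, add_zero, Nat.add_sub_cancel]
    refine Finset.sum_subset (Finset.range_subset_range.mpr (by omega)) (fun k hk1 hk2 => ?_)
    simp only [Finset.mem_range] at hk1 hk2
    rw [hc_of_gt (show n < 2*k by omega)]
    ring
  rw [hmid, hlast, ← Finset.sum_sub_distrib]
  refine Finset.sum_congr rfl fun k hk => ?_
  simp only [Finset.mem_range] at hk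
  -- pointwise identity
  rcases Nat.eq_zero_or_pos k with rfl | hkpos
  · simp only [if_pos rfl, sub_zero, Nat.mul_zero, Nat.sub_zero, hc_zero, if_true,
      eq_self_iff_true]
    ring
  · obtain ⟨j, rfl⟩ : ∃ j, k = j + 1 := ⟨k - 1, by omega⟩
    rw [if_neg (Nat.succ_ne_zero j), Nat.add_sub_cancel]
    rcases le_or_gt (2 * (j + 1)) (n + 2) with hle | hgt
    · -- main guards
      rcases le_or_gt (2 * j + 2) (n + 1) with hle1 | hgt1
      · -- general case : 2j ≤ n - 1
        obtain ⟨t, rfl⟩ : ∃ t, n = 2 * j + 1 + t := ⟨n - (2*j+1), by omega⟩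
        rw [hc_of_le (show 2*(j+1) ≤ 2*j+1+t+2 by omega),
            hc_of_le (show 2*(j+1) ≤ 2*j+1+t+1 by omega),
            hc_of_le (show 2*j ≤ 2*j+1+t by omega)]
        have e1 : 2*j+1+t+2 - 2*(j+1) = t + 1 := by omega
        have e2 : 2*j+1+t+1 - 2*(j+1) = t := by omega
        have e3 : 2*j+1+t - 2*j = t+1 := by omega
        rw [e1, e2, e3]
        have f1 : ((2*j+1+t+2).factorial : ℝ)
            = (((2*j+1+t : ℕ):ℝ)+2) * (((2*j+1+t : ℕ):ℝ)+1) * (((2*j+1+t).factorial : ℕ) : ℝ) := by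
          rw [show 2*j+1+t+2 = ((2*j+1+t)+1)+1 from rfl, fcast, fcast]; push_cast; ring
        have f2 : ((2*j+1+t+1).factorial : ℝ)
            = (((2*j+1+t : ℕ):ℝ)+1) * (((2*j+1+t).factorial : ℕ) : ℝ) := by
          rw [show 2*j+1+t+1 = (2*j+1+t)+1 from rfl, fcast]
        rw [f1, f2, fcast t, fcast j]
        push_cast
        field_simp
        ring
      · -- n = 2j case
        have hn : n = 2 * j := by omega
        subst hn
        rw [hc_of_le (show 2*(j+1) ≤ 2*j+2 by omega),
            hc_of_gt (show 2*j+1 < 2*(j+1) by omega),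
            hc_of_le (show 2*j ≤ 2*j by omega)]
        have e1 : 2*j + 2 - 2*(j+1) = 0 := by omega
        have e2 : 2*j - 2*j = 0 := by omega
        rw [e1, e2]
        simp only [pow_zero, Nat.sub_self, Nat.factorial_zero]
        push_cast [Nat.factorial_succ (2*j+1), Nat.factorial_succ (2*j), fcast j]
        field_simp
        ring
    · -- everything vanishes
      rw [hc_of_gt (by omega), hc_of_gt (by omega), hc_of_gt (by omega)]
      ring

lemma Herm_zero (x : ℝ) : Herm 0 x = 1 := by
  simp [Herm]

lemma Herm_one (x : ℝ) : Herm 1 x = 2 * x := by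
  simp [Herm]

lemma herm_mul_x (j : ℕ) (x : ℝ) :
    2 * x * Herm j x = Herm (j + 1) x + 2 * (j : ℝ) * Herm (j - 1) x := by
  cases j with
  | zero => rw [Herm_zero, Herm_one]; norm_num
  | succ k =>
    have h := herm_rec k x
    push_cast
    rw [show k + 1 + 1 = k + 2 from rfl, h]
    ring

lemma cast_choose_sub_right (n k : ℕ) :
    ((k : ℝ) + 1) * ((n.choose (k+1) : ℕ) : ℝ) = ((n : ℝ) - k) * ((n.choose k : ℕ) : ℝ) := by
  rcases le_or_gt (k+1) n with h | h
  · have := Nat.choose_succ_right_eq n k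
    have hcast : ((n.choose (k+1) * (k+1) : ℕ) : ℝ) = ((n.choose k * (n - k) : ℕ) : ℝ) := by
      exact congrArg (fun t : ℕ => (t : ℝ)) this
    push_cast [Nat.cast_sub (by omega : k ≤ n)] at hcast
    linarith [hcast]
  · rcases Nat.lt_or_ge n k with h2 | h2
    · rw [Nat.choose_eq_zero_of_lt (by omega), Nat.choose_eq_zero_of_lt (by omega)]
      simp
    · have hnk : n = k := by omega
      subst hnk
      rw [Nat.choose_eq_zero_of_lt (by omega), Nat.choose_self]
      simp
lemma cast_choose_absorb (j i : ℕ) :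
    ((j : ℝ) + 1 - i) * (((j+1).choose i : ℕ) : ℝ) = ((j : ℝ) + 1) * ((j.choose i : ℕ) : ℝ) := by
  rcases le_or_gt i (j+1) with h | h
  · have := Nat.choose_mul_succ_eq j i
    have hcast : ((j.choose i * (j+1) : ℕ) : ℝ) = (((j+1).choose i * (j + 1 - i) : ℕ) : ℝ) := by
      exact congrArg (fun t : ℕ => (t : ℝ)) this
    push_cast [Nat.cast_sub h] at hcast
    linarith [hcast]
  · rw [Nat.choose_eq_zero_of_lt (by omega), Nat.choose_eq_zero_of_lt (by omega)]
    simp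

lemma herm_mul (n : ℕ) : ∀ (m : ℕ) (x : ℝ), Herm m x * Herm n x =
    ∑ k ∈ Finset.range (m+1),
      (m.choose k : ℝ) * (n.choose k : ℝ) * (k.factorial : ℝ) * 2^k * Herm (m + n - 2*k) x := by
  have key : ∀ m : ℕ, (∀ x : ℝ, Herm m x * Herm n x =
      ∑ k ∈ Finset.range (m+1),
        (m.choose k : ℝ) * (n.choose k : ℝ) * (k.factorial : ℝ) * 2^k * Herm (m + n - 2*k) x)
      ∧ (∀ x : ℝ, Herm (m+1) x * Herm n x =
      ∑ k ∈ Finset.range (m+2),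
        ((m+1).choose k : ℝ) * (n.choose k : ℝ) * (k.factorial : ℝ) * 2^k
          * Herm (m + 1 + n - 2*k) x) := by
    intro m
    induction m with
    | zero =>
      constructor
      · intro x
        rw [Finset.sum_range_one, Herm_zero]
        norm_num
      · intro x
        rw [Finset.sum_range_succ, Finset.sum_range_one, Herm_one,
          show 0 + 1 + n - 2*0 = n + 1 by omega, show 0 + 1 + n - 2*1 = n - 1 by omega,
          herm_mul_x n x]
        simp only [Nat.choose_self, Nat.choose_zero_right, Nat.choose_one_right,
          Nat.factorial_zero, Nat.factorial_one, Nat.cast_one, pow_zero, pow_one]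
        ring
    | succ j ih =>
      refine ⟨ih.2, fun x => ?_⟩
      have e0 : Herm (j+1+1) x * Herm n x
          = 2*x*(Herm (j+1) x * Herm n x) - 2*((j:ℝ)+1)*(Herm j x * Herm n x) := by
        rw [show j+1+1 = j+2 from rfl, herm_rec j x]; ring
      rw [e0, ih.1 x, ih.2 x, Finset.mul_sum, Finset.mul_sum]
      -- first sum: apply herm_mul_x and split
      have e1 : ∀ k ∈ Finset.range (j+2),
          2*x*(((j+1).choose k : ℝ) * (n.choose k : ℝ) * (k.factorial : ℝ) * 2^k
            * Herm (j + 1 + n - 2*k) x)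
          = (((j+1).choose k : ℝ) * (n.choose k : ℝ) * (k.factorial : ℝ) * 2^k
              * Herm (j + 2 + n - 2*k) x)
            + ((2*((j:ℝ)+1+(n:ℝ)-2*(k:ℝ))) * (((j+1).choose k : ℝ) * (n.choose k : ℝ)
              * (k.factorial : ℝ) * 2^k) * Herm (j + n - 2*k) x) := by
        intro k hk
        simp only [Finset.mem_range] at hk
        rcases le_or_gt (2*k) (j+n) with hle | hgt
        · have i1 : j + 1 + n - 2*k + 1 = j + 2 + n - 2*k := by omega
          have i2 : j + 1 + n - 2*k - 1 = j + n - 2*k := by omega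
          have i3 : ((j + 1 + n - 2*k : ℕ) : ℝ) = (j:ℝ)+1+(n:ℝ)-2*(k:ℝ) := by
            have : 2*k ≤ j + 1 + n := by omega
            push_cast [Nat.cast_sub this]
            ring
          calc 2*x*(((j+1).choose k : ℝ) * (n.choose k : ℝ) * (k.factorial : ℝ) * 2^k
                * Herm (j + 1 + n - 2*k) x)
              = (((j+1).choose k : ℝ) * (n.choose k : ℝ) * (k.factorial : ℝ) * 2^k)
                * (2*x*Herm (j + 1 + n - 2*k) x) := by ring
            _ = _ := by
                rw [herm_mul_x, i1, i2, i3]; ring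
        · rcases le_or_gt k n with hkn | hkn
          · -- 2k > j+n, k ≤ n, k ≤ j+1 : then 2k = j+1+n exactly possible or 2k = j+n+1
            have h2k : 2*k = j + 1 + n := by omega
            have i3 : ((j + 1 + n - 2*k : ℕ) : ℝ) = 0 := by rw [h2k]; simp
            have i4 : ((j:ℝ)+1+(n:ℝ)-2*(k:ℝ)) = 0 := by
              have : ((2*k : ℕ) : ℝ) = ((j + 1 + n : ℕ) : ℝ) := by rw [h2k]
              push_cast at this
              linarith
            calc 2*x*(((j+1).choose k : ℝ) * (n.choose k : ℝ) * (k.factorial : ℝ) * 2^k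
                  * Herm (j + 1 + n - 2*k) x)
                = (((j+1).choose k : ℝ) * (n.choose k : ℝ) * (k.factorial : ℝ) * 2^k)
                  * (2*x*Herm (j + 1 + n - 2*k) x) := by ring
              _ = _ := by
                  rw [herm_mul_x, i3, i4]
                  have i5 : j + 1 + n - 2*k + 1 = j + 2 + n - 2 * k := by omega
                  rw [i5]; ring
          · have : (n.choose k : ℝ) = 0 := by
              rw [Nat.choose_eq_zero_of_lt hkn]; simp
            rw [this]; ring
      rw [Finset.sum_congr rfl e1, Finset.sum_add_distrib]
      -- T1 : extend to range (j+3)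
      have hT1 : ∑ k ∈ Finset.range (j+2),
          (((j+1).choose k : ℝ) * (n.choose k : ℝ) * (k.factorial : ℝ) * 2^k
            * Herm (j + 2 + n - 2*k) x)
          = ∑ k ∈ Finset.range (j+3),
          (((j+1).choose k : ℝ) * (n.choose k : ℝ) * (k.factorial : ℝ) * 2^k
            * Herm (j + 2 + n - 2*k) x) := by
        refine Finset.sum_subset (Finset.range_subset_range.mpr (by omega)) (fun k hk1 hk2 => ?_)
        simp only [Finset.mem_range] at hk1 hk2
        rw [Nat.choose_eq_zero_of_lt (show j+1 < k by omega)]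
        simp
      -- T2 : shift
      have hT2 : ∑ k ∈ Finset.range (j+2),
          ((2*((j:ℝ)+1+(n:ℝ)-2*(k:ℝ))) * (((j+1).choose k : ℝ) * (n.choose k : ℝ)
            * (k.factorial : ℝ) * 2^k) * Herm (j + n - 2*k) x)
          = ∑ k ∈ Finset.range (j+3),
            (if k = 0 then 0 else
              (2*((j:ℝ)+1+(n:ℝ)-2*((k:ℝ)-1))) * (((j+1).choose (k-1) : ℝ) * (n.choose (k-1) : ℝ)
                * ((k-1).factorial : ℝ) * 2^(k-1)) * Herm (j + 2 + n - 2*k) x) := by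
        rw [Finset.sum_range_succ' (fun k =>
            (if k = 0 then 0 else
              (2*((j:ℝ)+1+(n:ℝ)-2*((k:ℝ)-1))) * (((j+1).choose (k-1) : ℝ) * (n.choose (k-1) : ℝ)
                * ((k-1).factorial : ℝ) * 2^(k-1)) * Herm (j + 2 + n - 2*k) x)) (j+2)]
        simp only [if_neg (Nat.succ_ne_zero _), reduceIte, add_zero, Nat.add_sub_cancel]
        refine Finset.sum_congr rfl (fun k hk => ?_)
        rw [show j + 2 + n - 2*(k+1) = j + n - 2*k by omega]
        push_cast
        ring
      -- T3 : extend and shift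
      have hT3 : ∑ k ∈ Finset.range (j+1),
          2*((j:ℝ)+1)*((j.choose k : ℝ) * (n.choose k : ℝ) * (k.factorial : ℝ) * 2^k
            * Herm (j + n - 2*k) x)
          = ∑ k ∈ Finset.range (j+3),
            (if k = 0 then 0 else
              2*((j:ℝ)+1) * ((j.choose (k-1) : ℝ) * (n.choose (k-1) : ℝ)
                * ((k-1).factorial : ℝ) * 2^(k-1)) * Herm (j + 2 + n - 2*k) x) := by
        rw [Finset.sum_range_succ' (fun k =>
            (if k = 0 then 0 else
              2*((j:ℝ)+1) * ((j.choose (k-1) : ℝ) * (n.choose (k-1) : ℝ)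
                * ((k-1).factorial : ℝ) * 2^(k-1)) * Herm (j + 2 + n - 2*k) x)) (j+2)]
        simp only [if_neg (Nat.succ_ne_zero _), reduceIte, add_zero, Nat.add_sub_cancel]
        rw [Finset.sum_congr rfl (fun (k : ℕ) (hk : k ∈ Finset.range (j+2)) =>
          show (2*((j:ℝ)+1) * ((j.choose k : ℝ) * (n.choose k : ℝ)
                * (k.factorial : ℝ) * 2^k) * Herm (j + 2 + n - 2*(k+1)) x)
            = 2*((j:ℝ)+1)*((j.choose k : ℝ) * (n.choose k : ℝ) * (k.factorial : ℝ) * 2^k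
                * Herm (j + n - 2*k) x) by
          rw [show j + 2 + n - 2*(k+1) = j + n - 2*k by omega]; ring)]
        refine Finset.sum_subset (Finset.range_subset_range.mpr (by omega))
          (fun k hk1 hk2 => ?_)
        simp only [Finset.mem_range] at hk1 hk2
        rw [Nat.choose_eq_zero_of_lt (show j < k by omega)]
        simp
      rw [hT1, hT2, hT3, ← Finset.sum_add_distrib, ← Finset.sum_sub_distrib]
      refine Finset.sum_congr rfl (fun k hk => ?_)
      rcases Nat.eq_zero_or_pos k with rfl | hkpos
      · simp
      · obtain ⟨i, rfl⟩ : ∃ i, k = i + 1 := ⟨k - 1, by omega⟩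
        simp only [if_neg (Nat.succ_ne_zero _), Nat.add_sub_cancel]
        have hs : (((j+1+1).choose (i+1) : ℝ) * (n.choose (i+1) : ℝ)
              * ((i+1).factorial : ℝ) * 2^(i+1))
            = (((j+1).choose (i+1) : ℝ) * (n.choose (i+1) : ℝ) * ((i+1).factorial : ℝ) * 2^(i+1))
            + (2*((j:ℝ)+1+(n:ℝ)-2*(((i:ℝ)+1)-1))) * (((j+1).choose i : ℝ) * (n.choose i : ℝ)
                * (i.factorial : ℝ) * 2^i)
            - 2*((j:ℝ)+1) * ((j.choose i : ℝ) * (n.choose i : ℝ) * (i.factorial : ℝ) * 2^i) := by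
          rw [Nat.choose_succ_succ (j+1) i, fcast i]
          push_cast
          linear_combination ((i.factorial : ℝ)*2^(i+1)*((j+1).choose i : ℝ))
              * cast_choose_sub_right n i
            - (2*(i.factorial : ℝ)*2^i*(n.choose i : ℝ)) * cast_choose_absorb j i
        push_cast at hs ⊢
        linear_combination (-(Herm (j + 2 + n - 2*(i+1)) x)) * hs
  exact fun m => (key m).1

lemma poch_zero (a : ℝ) : poch a 0 = 1 := by simp [poch]

lemma poch_succ (a : ℝ) (k : ℕ) : poch a (k+1) = poch a k * (a + k) := by
  rw [poch, poch, Finset.prod_range_succ]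

lemma fne' (a : ℕ) : ((a.factorial : ℕ) : ℝ) ≠ 0 :=
  Nat.cast_ne_zero.mpr (Nat.factorial_ne_zero a)

/-- (pB) : `(-r)_j (1/2-r)_j = (2r)! / ((2r-2j)! 4^j)` for `j ≤ r`. -/
lemma poch_prod_eq (r : ℕ) : ∀ j : ℕ, j ≤ r →
    poch (-(r:ℝ)) j * poch (1/2 - r) j
      = ((2*r).factorial : ℝ) / (((2*r - 2*j).factorial : ℝ) * 4 ^ j) := by
  intro j
  induction j with
  | zero =>
    intro _
    simp [poch_zero, div_self (fne' (2*r))]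
  | succ j ih =>
    intro hj
    obtain ⟨t, rfl⟩ : ∃ t, r = j + 1 + t := ⟨r - (j+1), by omega⟩
    rw [poch_succ, poch_succ, mul_mul_mul_comm, ih (by omega)]
    have e1 : 2*(j+1+t) - 2*j = 2*t + 2 := by omega
    have e2 : 2*(j+1+t) - 2*(j+1) = 2*t := by omega
    rw [e1, e2]
    have f1 : (((2*t+2)).factorial : ℝ) = ((2*t:ℝ)+2) * ((2*t:ℝ)+1) * ((2*t).factorial : ℝ) := by
      rw [show 2*t+2 = (2*t+1)+1 from rfl, Nat.factorial_succ, Nat.factorial_succ]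
      push_cast; ring
    rw [f1]
    have h4 : (4:ℝ) ^ (j+1) = 4^j * 4 := by ring
    rw [h4]
    have hne1 : (((2*t).factorial : ℕ) : ℝ) ≠ 0 := fne' _
    have hne2 : (4:ℝ)^j ≠ 0 := by positivity
    field_simp
    push_cast
    ring

/-- (pC) : Gamma shift. -/
lemma Gamma_shift (c : ℝ) (j : ℕ) (h : ∀ i : ℕ, i < j → c + i ≠ 0) :
    Real.Gamma (c + j) = poch c j * Real.Gamma c := by
  induction j with
  | zero => simp [poch_zero]
  | succ j ih =>
    have hcj : c + j ≠ 0 := h j (by omega)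
    have : c + (j+1 : ℕ) = (c + j) + 1 := by push_cast; ring
    rw [this, Real.Gamma_add_one hcj, ih (fun i hi => h i (by omega)), poch_succ]
    ring

/-- (pD) : reflection. -/
lemma poch_reflect (a : ℝ) (j : ℕ) :
    poch (1 - a) j = (-1)^j * poch (a - j) j := by
  have h1 : poch (1 - a) j = ∏ i ∈ Finset.range j, ((-1) * (a - 1 - i)) := by
    rw [poch]
    exact Finset.prod_congr rfl fun i _ => by ring
  rw [h1, Finset.prod_mul_distrib, Finset.prod_const, Finset.card_range]
  congr 1
  have h2 := Finset.prod_range_reflect (fun i => (a - j + i)) j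
  rw [poch, ← h2]
  exact Finset.prod_congr rfl fun i hi => by
    simp only [Finset.mem_range] at hi
    have : ((j - 1 - i : ℕ) : ℝ) = (j:ℝ) - 1 - i := by
      push_cast [Nat.cast_sub (by omega : i ≤ j - 1), Nat.cast_sub (by omega : 1 ≤ j)]
      ring
    rw [this]
    ring


lemma half_add_ne (m i : ℕ) : ((m : ℝ) + 1/2) + i ≠ 0 := by
  intro h
  have : ((2 * m + 2 * i + 1 : ℕ) : ℝ) = 0 := by push_cast; linarith
  have h2 : (2 * m + 2 * i + 1 : ℕ) = 0 := by exact_mod_cast this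
  omega

/-- nonvanishing of `poch` at half-integers. -/
lemma poch_half_ne_zero (m : ℕ) (j : ℕ) : poch ((m : ℝ) + 1/2) j ≠ 0 := by
  rw [poch]
  refine Finset.prod_ne_zero_iff.mpr fun i _ => half_add_ne m i

lemma xs_herm_expand {β : ℝ} (s m : ℕ) : (fun x : ℝ => x^s * Real.exp (-β*x^2) * Herm m x)
    = fun x => ∑ l ∈ Finset.range (m+1),
        (hc m l * 2^(m-2*l)) * (x^(s+(m-2*l)) * Real.exp (-β*x^2)) := by
  funext x
  rw [Herm_eq_sum, Finset.mul_sum]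
  refine Finset.sum_congr rfl fun l _ => ?_
  rw [mul_pow, pow_add]
  ring

lemma integrable_xs_herm {β : ℝ} (hβ : 0 < β) (s m : ℕ) :
    Integrable (fun x : ℝ => x^s * Real.exp (-β*x^2) * Herm m x) := by
  rw [xs_herm_expand]
  exact integrable_finset_sum _ fun l _ => ((integrable_pow_gauss hβ _).const_mul _)

lemma integral_xs_herm {β : ℝ} (hβ : 0 < β) (σ r : ℕ) :
    ∫ x : ℝ, x^(2*σ) * Real.exp (-β*x^2) * Herm (2*r) x
      = ∑ l ∈ Finset.range (r+1), hc (2*r) l * 2^(2*r-2*l)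
          * Real.Gamma (((σ + (r - l) : ℕ):ℝ) + 1/2) * β ^ (-(((σ + (r-l) : ℕ):ℝ) + 1/2)) := by
  rw [xs_herm_expand, integral_finset_sum _ (fun l _ => ((integrable_pow_gauss hβ _).const_mul _))]
  rw [← Finset.sum_subset (Finset.range_subset_range.mpr (by omega : r + 1 ≤ 2*r + 1))
    (fun l hl1 hl2 => ?_)]
  · refine Finset.sum_congr rfl fun l hl => ?_
    simp only [Finset.mem_range] at hl
    rw [MeasureTheory.integral_const_mul, show 2*σ+(2*r-2*l) = 2*(σ+(r-l)) by omega,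
      moment_gauss hβ (σ+(r-l))]
    ring
  · simp only [Finset.mem_range] at hl1 hl2
    rw [hc_of_gt (by omega)]
    simp

end HermAux

/-- diagonal (`m = n`) Krein-like 2-functional of Hermite polynomials
(algebraic approach). -/
theorem hermite_krein_2_functional_algebraic_diagonal (n s : ℕ) (hs : Even s)
    (β : ℝ) (hβ : 0 < β) :
    ∫ x : ℝ, x ^ s * Real.exp (-β * x ^ 2) * (Herm n x) ^ 2 =
      (2 : ℝ) ^ (2 * n) * β ^ (-(n : ℝ) - ((s : ℝ) + 1) / 2) *
        ∑ k ∈ Finset.range (n + 1),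
          (n.choose k : ℝ) ^ 2 * (k.factorial : ℝ) * (β / 2) ^ k *
            Real.Gamma (1 / 2 - (k : ℝ) + (n : ℝ) + (s : ℝ) / 2) *
            hyp2F1 (n - k) (1 / 2 + (k : ℝ) - (n : ℝ))
              (1 / 2 + (k : ℝ) - (n : ℝ) - (s : ℝ) / 2) β := by
  obtain ⟨σ, hσ⟩ := hs
  have hss : s = 2 * σ := by omega
  subst hss
  -- STEP A : compute the integral
  have h1 : (fun x : ℝ => x ^ (2*σ) * Real.exp (-β * x ^ 2) * (Herm n x) ^ 2)
      = fun x => ∑ k ∈ Finset.range (n+1),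
          ((n.choose k:ℝ) * (n.choose k) * (k.factorial : ℝ) * 2^k)
          * (x ^ (2*σ) * Real.exp (-β * x ^ 2) * Herm (2*(n-k)) x) := by
    funext x
    rw [pow_two (Herm n x), herm_mul n n x, Finset.mul_sum]
    refine Finset.sum_congr rfl fun k hk => ?_
    simp only [Finset.mem_range] at hk
    rw [show n + n - 2*k = 2*(n-k) by omega]
    ring
  rw [h1, integral_finset_sum _ (fun k _ => ((integrable_xs_herm hβ _ _).const_mul _))]
  rw [Finset.sum_congr rfl (fun (k : ℕ) _ =>
    MeasureTheory.integral_const_mul ((n.choose k:ℝ) * (n.choose k) * (k.factorial : ℝ) * 2^k) _)]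
  rw [Finset.sum_congr rfl (fun (k : ℕ) _ => by rw [integral_xs_herm hβ σ (n-k)])]
  -- STEP B : massage the RHS
  rw [Finset.mul_sum]
  refine Finset.sum_congr rfl fun k hk => ?_
  simp only [Finset.mem_range] at hk
  have hk' : k ≤ n := by omega
  have hb : (1/2 + (k:ℝ) - n) = 1/2 - ((n-k : ℕ):ℝ) := by
    rw [Nat.cast_sub hk']; ring
  have hΓa : 1/2 - (k:ℝ) + n + ((2*σ : ℕ):ℝ)/2 = (((n-k) + σ : ℕ):ℝ) + 1/2 := by
    push_cast [Nat.cast_sub hk']; ring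
  have hc1 : 1/2 + (k:ℝ) - n - ((2*σ : ℕ):ℝ)/2 = 1 - ((((n-k) + σ : ℕ):ℝ) + 1/2) := by
    push_cast [Nat.cast_sub hk']; ring
  rw [hΓa, hc1, hb, hyp2F1]
  rw [Finset.mul_sum, Finset.mul_sum, Finset.mul_sum]
  refine Finset.sum_congr rfl fun j hj => ?_
  simp only [Finset.mem_range] at hj
  have hj' : j ≤ n - k := by omega
  have hjσ : j ≤ (n-k) + σ := by omega
  -- components
  have hP := poch_prod_eq (n-k) j hj'
  have hR := poch_reflect ((((n-k) + σ : ℕ):ℝ) + 1/2) j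
  have hshift : ((((n-k) + σ : ℕ):ℝ) + 1/2) - (j:ℝ) = (((n-k) + σ - j : ℕ):ℝ) + 1/2 := by
    push_cast [Nat.cast_sub hjσ]; ring
  have hG : Real.Gamma ((((n-k) + σ : ℕ):ℝ) + 1/2)
      = poch ((((n-k) + σ - j : ℕ):ℝ) + 1/2) j * Real.Gamma ((((n-k) + σ - j : ℕ):ℝ) + 1/2) := by
    have h0 := Gamma_shift ((((n-k) + σ - j : ℕ):ℝ) + 1/2) j
      (fun i _ => by
        have := half_add_ne ((n-k) + σ - j) i
        exact fun hcon => this (by linarith [hcon]))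
    rw [← h0]
    congr 1
    push_cast [Nat.cast_sub hjσ]
    ring
  have hpne : poch ((((n-k) + σ - j : ℕ):ℝ) + 1/2) j ≠ 0 := poch_half_ne_zero _ j
  have hidx : σ + ((n-k) - j) = (n-k) + σ - j := by omega
  have hhc : hc (2*(n-k)) j = (-1 : ℝ)^j * ((2*(n-k)).factorial : ℝ) /
      ((j.factorial : ℝ) * ((2*(n-k) - 2*j).factorial : ℝ)) := hc_of_le (by omega)
  have hpow : β ^ (-(n:ℝ) - (((2*σ : ℕ):ℝ)+1)/2) * (β ^ k * β ^ j)
      = β ^ (-((((n-k) + σ - j : ℕ):ℝ) + 1/2)) := by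
    rw [← Real.rpow_natCast β k, ← Real.rpow_natCast β j, ← Real.rpow_add hβ, ← Real.rpow_add hβ]
    congr 1
    push_cast [Nat.cast_sub hjσ, Nat.cast_sub hk']
    ring
  rw [hidx, hhc, hG, hR, hshift, hP, ← hpow]
  obtain ⟨t, ht⟩ : ∃ t, n - k = j + t := ⟨(n-k) - j, by omega⟩
  rw [show 2*(n-k) - 2*j = 2*t by omega, show 2*n = 2*k + 2*j + 2*t by omega]
  have h4 : (4:ℝ)^j = 2^j * 2^j := by rw [← mul_pow]; norm_num
  rw [h4]
  have hβ0 : β ≠ 0 := ne_of_gt hβ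
  generalize hgen : poch ((((n-k) + σ - j : ℕ):ℝ) + 1/2) j = P at hpne ⊢
  field_simp [hpne, fne' j, fne' (2*t)]
  have hneg : ((-1:ℝ)) ^ (j*2) = 1 := by rw [mul_comm, pow_mul]; norm_num
  ring_nf
  rw [hneg]
  have h2k : (1/2:ℝ)^k * 2^(k*2) = 2^k := by
    rw [mul_comm k 2, pow_mul, ← mul_pow]; norm_num
  linear_combination (-((n.choose k : ℝ) ^ 2 * β ^ k * 2 ^ (j * 2) * 2 ^ (t * 2))) * h2k
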